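/- Let ρ : [t₀,t₁] → ℝ be measurable and nonnegative, γ : [t₀,t₁] → ℝ nonnegative and locally integrable, and μ : [0,∞) → [0,∞) continuous and nondecreasing with μ(0)=0. Suppose ρ(t) ≤ ∫_{t₀}^t γ(τ) μ(ρ(τ)) dτ for all t ∈ [t₀,t₁]. If ∫_0^1 dr/μ(r) = +∞, then ρ ≡ 0 on [t₀,t₁]. -/

import Mathlib

open MeasureTheory Set

/-- **Osgood's lemma, case `a = 0`.** If `ρ` is measurable and nonnegative on `[t₀,t₁]`,
`γ` is nonnegative and integrable on `[t₀,t₁]`, `μ : [0,∞) → [0,∞)` is continuous,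
nondecreasing with `μ 0 = 0`, if `ρ t ≤ ∫_{t₀}^t γ τ * μ (ρ τ) dτ` on `[t₀,t₁]`, and the
Osgood condition `∫₀¹ dr / μ r = +∞` holds, then `ρ ≡ 0` on `[t₀,t₁]`. -/
theorem osgood_lemma_zero (t₀ t₁ : ℝ) (ht : t₀ ≤ t₁) (ρ γ μ : ℝ → ℝ)
    (hρ_meas : AEMeasurable ρ (volume.restrict (Icc t₀ t₁)))
    (hρ_nonneg : ∀ t ∈ Icc t₀ t₁, 0 ≤ ρ t)
    (hγ_nonneg : ∀ t ∈ Icc t₀ t₁, 0 ≤ γ t)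
    (hγ_int : IntegrableOn γ (Icc t₀ t₁))
    (hμ_cont : ContinuousOn μ (Ici 0))
    (hμ_mono : MonotoneOn μ (Ici 0))
    (hμ_nonneg : ∀ x, 0 ≤ x → 0 ≤ μ x)
    (hμ_zero : μ 0 = 0)
    (hbound : ∀ t ∈ Icc t₀ t₁, ρ t ≤ ∫ τ in t₀..t, γ τ * μ (ρ τ))
    (hosgood : ∫⁻ r in Ioo (0:ℝ) 1, ENNReal.ofReal (μ r)⁻¹ = ⊤) :
    ∀ t ∈ Icc t₀ t₁, ρ t = 0 := by
  intro t htmem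
  obtain ⟨ht₀t, htt₁⟩ := htmem
  set f : ℝ → ℝ := fun τ => γ τ * μ (ρ τ) with hf_def
  by_cases hf : IntervalIntegrable f volume t₀ t
  swap
  · have h0 := hbound t ⟨ht₀t, htt₁⟩
    rw [intervalIntegral.integral_undef hf] at h0
    exact le_antisymm h0 (hρ_nonneg t ⟨ht₀t, htt₁⟩)
  -- main case
  have hIccsub : Icc t₀ t ⊆ Icc t₀ t₁ := Icc_subset_Icc le_rfl htt₁
  set M : ℝ → ℝ := fun s => ∫ τ in t₀..s, f τ with hM_def
  have hf_sub : ∀ a b, a ∈ Icc t₀ t → b ∈ Icc t₀ t → IntervalIntegrable f volume a b := by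
    intro a b ha hb
    refine hf.mono_set ?_
    rw [uIcc_of_le ht₀t]
    exact uIcc_subset_Icc ha hb
  have hγ_sub : ∀ a b, a ∈ Icc t₀ t₁ → b ∈ Icc t₀ t₁ → IntervalIntegrable γ volume a b := by
    intro a b ha hb
    exact (hγ_int.mono_set (uIcc_subset_Icc ha hb)).intervalIntegrable
  have hf_nonneg : ∀ τ ∈ Icc t₀ t₁, 0 ≤ f τ := fun τ hτ =>
    mul_nonneg (hγ_nonneg τ hτ) (hμ_nonneg _ (hρ_nonneg τ hτ))
  have hM_diff : ∀ a b, a ∈ Icc t₀ t → b ∈ Icc t₀ t → M b - M a = ∫ τ in a..b, f τ := by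
    intro a b ha hb
    exact intervalIntegral.integral_interval_sub_left
      (hf_sub t₀ b ⟨le_rfl, ht₀t⟩ hb) (hf_sub t₀ a ⟨le_rfl, ht₀t⟩ ha)
  have hM_mono : ∀ a b, a ∈ Icc t₀ t → b ∈ Icc t₀ t → a ≤ b → M a ≤ M b := by
    intro a b ha hb hab
    have h1 := hM_diff a b ha hb
    have h2 : 0 ≤ ∫ τ in a..b, f τ :=
      intervalIntegral.integral_nonneg hab fun u hu =>
        hf_nonneg u (hIccsub ⟨ha.1.trans hu.1, hu.2.trans hb.2⟩)
    linarith
  have hM0 : M t₀ = 0 := intervalIntegral.integral_same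
  have hρM : ∀ τ, τ ∈ Icc t₀ t → ρ τ ≤ M τ := fun τ hτ => hbound τ (hIccsub hτ)
  have hM_nonneg : ∀ s ∈ Icc t₀ t, 0 ≤ M s := by
    intro s hs
    have := hM_mono t₀ s ⟨le_rfl, ht₀t⟩ hs hs.1
    linarith
  -- increment bound
  have hM_incr : ∀ a b, a ∈ Icc t₀ t → b ∈ Icc t₀ t → a ≤ b →
      M b - M a ≤ (∫ τ in a..b, γ τ) * μ (M b) := by
    intro a b ha hb hab
    rw [hM_diff a b ha hb]
    have hγab : IntervalIntegrable γ volume a b := hγ_sub a b (hIccsub ha) (hIccsub hb)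
    have hmono : ∀ τ ∈ Icc a b, f τ ≤ γ τ * μ (M b) := by
      intro τ hτ
      have hτ' : τ ∈ Icc t₀ t := ⟨ha.1.trans hτ.1, hτ.2.trans hb.2⟩
      have h1 : ρ τ ≤ M τ := hρM τ hτ'
      have h2 : M τ ≤ M b := hM_mono τ b hτ' hb hτ.2
      have h3 : μ (ρ τ) ≤ μ (M b) :=
        hμ_mono (hρ_nonneg τ (hIccsub hτ')) (hM_nonneg b hb) (h1.trans h2)
      exact mul_le_mul_of_nonneg_left h3 (hγ_nonneg τ (hIccsub hτ'))
    calc (∫ τ in a..b, f τ) ≤ ∫ τ in a..b, γ τ * μ (M b) :=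
          intervalIntegral.integral_mono_on hab (hf_sub a b ha hb) (hγab.mul_const _) hmono
      _ = (∫ τ in a..b, γ τ) * μ (M b) := intervalIntegral.integral_mul_const _ _
  -- reduce to M t = 0
  have hρt : ρ t ≤ M t := hρM t ⟨ht₀t, le_rfl⟩
  have hρt0 : 0 ≤ ρ t := hρ_nonneg t ⟨ht₀t, htt₁⟩
  rcases eq_or_lt_of_le (hM_nonneg t ⟨ht₀t, le_rfl⟩) with hMt | hb
  · exact le_antisymm (hρt.trans hMt.ge) hρt0
  exfalso
  -- continuity and IVT
  have hMcont : ContinuousOn M (Icc t₀ t) := by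
    have := intervalIntegral.continuousOn_primitive_interval' hf
      (by rw [uIcc_of_le ht₀t]; exact ⟨le_rfl, ht₀t⟩)
    rwa [uIcc_of_le ht₀t] at this
  have hIVT : ∀ y, 0 ≤ y → y ≤ M t → ∃ s ∈ Icc t₀ t, M s = y := by
    intro y h1 h2
    have := intermediate_value_Icc ht₀t hMcont
    have hy : y ∈ Icc (M t₀) (M t) := by rw [hM0]; exact ⟨h1, h2⟩
    obtain ⟨s, hs, hMs⟩ := this hy
    exact ⟨s, hs, hMs⟩
  -- positivity of μ on (0, M t]
  have hpos : ∀ y, 0 < y → y ≤ M t → 0 < μ y := by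
    intro y hy hyM
    rcases hIVT y hy.le hyM with ⟨s, hs, hMs⟩
    by_contra h
    push_neg at h
    have hμy : μ y = 0 := le_antisymm h (hμ_nonneg y hy.le)
    have hEq : EqOn f (fun _ => (0:ℝ)) (uIcc t₀ s) := by
      rw [uIcc_of_le hs.1]
      intro τ hτ
      have hτ' : τ ∈ Icc t₀ t := ⟨hτ.1, hτ.2.trans hs.2⟩
      have h1 : ρ τ ≤ M τ := hρM τ hτ'
      have h2 : M τ ≤ M s := hM_mono τ s hτ' hs hτ.2
      have h3 : μ (ρ τ) ≤ μ y :=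
        hμ_mono (hρ_nonneg τ (hIccsub hτ')) hy.le (by linarith)
      have h4 : μ (ρ τ) = 0 :=
        le_antisymm (by linarith) (hμ_nonneg _ (hρ_nonneg τ (hIccsub hτ')))
      show γ τ * μ (ρ τ) = 0
      rw [h4, mul_zero]
    have : M s = 0 := by
      have h5 : (∫ τ in t₀..s, f τ) = ∫ _ in t₀..s, (0:ℝ) :=
        intervalIntegral.integral_congr (μ := volume) hEq
      simpa [hM_def] using h5
    rw [hMs] at this
    exact hy.ne' this
  -- the geometric level sequence
  set c : ℝ := min (M t) 1 with hc_def
  have hc0 : 0 < c := lt_min hb one_pos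
  have hc1 : c ≤ 1 := min_le_right _ _
  have hcM : c ≤ M t := min_le_left _ _
  set b : ℕ → ℝ := fun n => c / 2 ^ n with hb_def
  have hb_pos : ∀ n, 0 < b n := fun n => div_pos hc0 (pow_pos two_pos n)
  have hb_le_c : ∀ n, b n ≤ c := fun n =>
    div_le_self hc0.le (one_le_pow₀ one_le_two)
  have hb_succ : ∀ n, b n - b (n + 1) = b (n + 1) := by
    intro n
    simp only [hb_def]
    rw [pow_succ]
    field_simp
    ring
  have hb_two : ∀ n, b (n + 1) = 2 * b (n + 2) := by
    intro n
    simp only [hb_def]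
    rw [pow_succ (2:ℝ) (n+1)]
    field_simp
  have hb_lt : ∀ n, b (n + 1) < b n := fun n => by
    have := hb_succ n
    have := hb_pos (n + 1)
    linarith
  have hb_zero : b 0 = c := by simp [hb_def]
  -- hitting times
  have hS : ∀ n, ∃ s ∈ Icc t₀ t, M s = b n := fun n =>
    hIVT (b n) (hb_pos n).le ((hb_le_c n).trans hcM)
  choose s hs_mem hs_val using hS
  have hs_anti : ∀ n, s (n + 1) ≤ s n := by
    intro n
    by_contra h
    push_neg at h
    have := hM_mono (s n) (s (n + 1)) (hs_mem n) (hs_mem (n + 1)) h.le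
    rw [hs_val, hs_val] at this
    exact absurd this (not_le.2 (hb_lt n))
  set D : ℕ → ℝ := fun n => ∫ τ in s (n + 1)..s n, γ τ with hD_def
  have hD_nonneg : ∀ n, 0 ≤ D n := by
    intro n
    refine intervalIntegral.integral_nonneg (hs_anti n) fun u hu => ?_
    exact hγ_nonneg u (hIccsub ⟨(hs_mem (n+1)).1.trans hu.1, hu.2.trans (hs_mem n).2⟩)
  have hkey : ∀ n, b (n + 1) ≤ D n * μ (b n) := by
    intro n
    have h := hM_incr (s (n + 1)) (s n) (hs_mem (n + 1)) (hs_mem n) (hs_anti n)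
    rw [hs_val, hs_val] at h
    have := hb_succ n
    simp only [hD_def]
    linarith
  -- the density measure
  set g : ℝ → ENNReal := fun r => ENNReal.ofReal (μ (max r 0))⁻¹ with hg_def
  set ν : Measure ℝ := volume.withDensity g with hν_def
  have hν_apply : ∀ (u : Set ℝ), MeasurableSet u → ν u = ∫⁻ r in u, g r := fun u hu =>
    withDensity_apply g hu
  have hosgood' : ν (Ioo 0 1) = ⊤ := by
    rw [hν_apply _ measurableSet_Ioo, ← hosgood]
    refine setLIntegral_congr_fun measurableSet_Ioo (fun r hr => ?_)
    simp only [hg_def]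
    rw [max_eq_left hr.1.le]
  -- per-step lintegral bound
  have hstep : ∀ n, ν (Ioc (b (n + 1)) (b n)) ≤ ENNReal.ofReal (2 * D (n + 1)) := by
    intro n
    rw [hν_apply _ measurableSet_Ioc]
    have hμpos : 0 < μ (b (n + 1)) := hpos _ (hb_pos _) ((hb_le_c _).trans hcM)
    have hbnd : ∀ r ∈ Ioc (b (n + 1)) (b n), g r ≤ ENNReal.ofReal (μ (b (n + 1)))⁻¹ := by
      intro r hr
      have hr0 : 0 < r := (hb_pos (n + 1)).trans hr.1
      simp only [hg_def]
      rw [max_eq_left hr0.le]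
      refine ENNReal.ofReal_le_ofReal (inv_anti₀ hμpos ?_)
      exact hμ_mono (hb_pos (n + 1)).le hr0.le hr.1.le
    calc (∫⁻ r in Ioc (b (n + 1)) (b n), g r)
        ≤ ∫⁻ _ in Ioc (b (n + 1)) (b n), ENNReal.ofReal (μ (b (n + 1)))⁻¹ :=
          setLIntegral_mono' measurableSet_Ioc hbnd
      _ = ENNReal.ofReal (μ (b (n + 1)))⁻¹ * volume (Ioc (b (n + 1)) (b n)) :=
          setLIntegral_const _ _
      _ = ENNReal.ofReal ((μ (b (n + 1)))⁻¹ * (b n - b (n + 1))) := by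
          rw [Real.volume_Ioc, ← ENNReal.ofReal_mul (inv_nonneg.2 hμpos.le)]
      _ ≤ ENNReal.ofReal (2 * D (n + 1)) := by
          refine ENNReal.ofReal_le_ofReal ?_
          have h1 : b (n + 2) * (μ (b (n + 1)))⁻¹ ≤ D (n + 1) := by
            rw [← div_eq_mul_inv, div_le_iff₀ hμpos]
            exact hkey (n + 1)
          calc (μ (b (n + 1)))⁻¹ * (b n - b (n + 1))
              = 2 * (b (n + 2) * (μ (b (n + 1)))⁻¹) := by
                rw [hb_succ n, hb_two n]; ring
            _ ≤ 2 * D (n + 1) := by linarith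
  -- telescoping bound
  set G : ℝ → ℝ := fun u => ∫ τ in t₀..u, γ τ with hG_def
  set A : ℝ := G t with hA_def
  have hDG : ∀ n, D n = G (s n) - G (s (n + 1)):= by
    intro n
    exact (intervalIntegral.integral_interval_sub_left
      (hγ_sub t₀ (s n) ⟨le_rfl, ht⟩ (hIccsub (hs_mem n)))
      (hγ_sub t₀ (s (n + 1)) ⟨le_rfl, ht⟩ (hIccsub (hs_mem (n + 1))))).symm
  have hG_nonneg : ∀ u ∈ Icc t₀ t, 0 ≤ G u := by
    intro u hu
    exact intervalIntegral.integral_nonneg hu.1 fun x hx =>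
      hγ_nonneg x (hIccsub ⟨hx.1, hx.2.trans hu.2⟩)
  have hG_le : ∀ u ∈ Icc t₀ t, G u ≤ A := by
    intro u hu
    have h1 : A - G u = ∫ τ in u..t, γ τ :=
      intervalIntegral.integral_interval_sub_left
        (hγ_sub t₀ t ⟨le_rfl, ht⟩ ⟨ht₀t, htt₁⟩)
        (hγ_sub t₀ u ⟨le_rfl, ht⟩ (hIccsub hu))
    have h2 : 0 ≤ ∫ τ in u..t, γ τ :=
      intervalIntegral.integral_nonneg hu.2 fun x hx =>
        hγ_nonneg x (hIccsub ⟨hu.1.trans hx.1, hx.2⟩)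
    linarith
  have hsum : ∀ N, ν (Ioc (b N) c) ≤ ENNReal.ofReal (2 * A) := by
    intro N
    have h1 : ν (Ioc (b N) c) ≤ ∑ n ∈ Finset.range N, ν (Ioc (b (n + 1)) (b n)) := by
      induction N with
      | zero => simp [hb_zero]
      | succ N ih =>
        have hcut : Ioc (b (N + 1)) c = Ioc (b (N + 1)) (b N) ∪ Ioc (b N) c := by
          rw [Ioc_union_Ioc_eq_Ioc (hb_lt N).le (hb_le_c N)]
        rw [hcut, Finset.sum_range_succ]
        calc ν (Ioc (b (N + 1)) (b N) ∪ Ioc (b N) c)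
            ≤ ν (Ioc (b (N + 1)) (b N)) + ν (Ioc (b N) c) := measure_union_le _ _
          _ ≤ ν (Ioc (b (N + 1)) (b N)) + ∑ n ∈ Finset.range N, ν (Ioc (b (n + 1)) (b n)) := by
              exact add_le_add le_rfl ih
          _ = (∑ n ∈ Finset.range N, ν (Ioc (b (n + 1)) (b n))) + ν (Ioc (b (N + 1)) (b N)) := by
              ring
    have h2 : (∑ n ∈ Finset.range N, ν (Ioc (b (n + 1)) (b n)))
        ≤ ∑ n ∈ Finset.range N, ENNReal.ofReal (2 * D (n + 1)) :=
      Finset.sum_le_sum fun n _ => hstep n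
    have h3 : (∑ n ∈ Finset.range N, ENNReal.ofReal (2 * D (n + 1)))
        = ENNReal.ofReal (∑ n ∈ Finset.range N, 2 * D (n + 1)) :=
      (ENNReal.ofReal_sum_of_nonneg fun n _ => by
        have := hD_nonneg (n + 1); linarith).symm
    have h4 : (∑ n ∈ Finset.range N, 2 * D (n + 1)) ≤ 2 * A := by
      have htel : (∑ n ∈ Finset.range N, (G (s (n + 1)) - G (s (n + 2))))
          = G (s 1) - G (s (N + 1)) := Finset.sum_range_sub' (fun i => G (s (i + 1))) N
      have heq : (∑ n ∈ Finset.range N, 2 * D (n + 1))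
          = 2 * ∑ n ∈ Finset.range N, (G (s (n + 1)) - G (s (n + 2))) := by
        rw [Finset.mul_sum]
        exact Finset.sum_congr rfl fun n _ => by rw [hDG (n + 1)]
      rw [heq, htel]
      have := hG_le (s 1) (hs_mem 1)
      have := hG_nonneg (s (N + 1)) (hs_mem (N + 1))
      linarith
    calc ν (Ioc (b N) c) ≤ ∑ n ∈ Finset.range N, ν (Ioc (b (n + 1)) (b n)) := h1
      _ ≤ ENNReal.ofReal (∑ n ∈ Finset.range N, 2 * D (n + 1)) := h2.trans h3.le
      _ ≤ ENNReal.ofReal (2 * A) := ENNReal.ofReal_le_ofReal h4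
  -- covering (0, c)
  have hcover : ν (Ioo 0 c) ≤ ENNReal.ofReal (2 * A) := by
    have hU : Ioo 0 c ⊆ ⋃ N, Ioc (b N) c := by
      intro r hr
      obtain ⟨N, hN⟩ := pow_unbounded_of_one_lt (c / r) (one_lt_two (α := ℝ))
      have hbN : b N < r := by
        rw [hb_def]
        rw [div_lt_iff₀ (pow_pos two_pos N)]
        rw [div_lt_iff₀ hr.1] at hN
        linarith [hN]
      exact mem_iUnion.2 ⟨N, hbN, hr.2.le⟩
    have hdir : Directed (· ⊆ ·) fun N => Ioc (b N) c := by
      refine (monotone_nat_of_le_succ fun n => ?_).directed_le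
      exact Ioc_subset_Ioc_left (hb_lt n).le
    calc ν (Ioo 0 c) ≤ ν (⋃ N, Ioc (b N) c) := measure_mono hU
      _ = ⨆ N, ν (Ioc (b N) c) := hdir.measure_iUnion
      _ ≤ ENNReal.ofReal (2 * A) := iSup_le hsum
  -- the tail [c, 1)
  have htail : ν (Ico c 1) < ⊤ := by
    rw [hν_apply _ measurableSet_Ico]
    have hμc : 0 < μ c := hpos c hc0 hcM
    have hbnd : ∀ r ∈ Ico c 1, g r ≤ ENNReal.ofReal (μ c)⁻¹ := by
      intro r hr
      have hr0 : 0 < r := hc0.trans_le hr.1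
      simp only [hg_def]
      rw [max_eq_left hr0.le]
      exact ENNReal.ofReal_le_ofReal
        (inv_anti₀ hμc (hμ_mono hc0.le hr0.le hr.1))
    calc (∫⁻ r in Ico c 1, g r)
        ≤ ∫⁻ _ in Ico c 1, ENNReal.ofReal (μ c)⁻¹ := setLIntegral_mono' measurableSet_Ico hbnd
      _ = ENNReal.ofReal (μ c)⁻¹ * volume (Ico c 1) := setLIntegral_const _ _
      _ < ⊤ := by
          rw [Real.volume_Ico]
          exact ENNReal.mul_lt_top ENNReal.ofReal_lt_top ENNReal.ofReal_lt_top
  -- contradiction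
  have hsplit : Ioo (0:ℝ) 1 ⊆ Ioo 0 c ∪ Ico c 1 := by
    intro r hr
    by_cases h : r < c
    · exact Or.inl ⟨hr.1, h⟩
    · exact Or.inr ⟨not_lt.1 h, hr.2⟩
  have hlt : ν (Ioo 0 1) < ⊤ := by
    calc ν (Ioo 0 1) ≤ ν (Ioo 0 c ∪ Ico c 1) := measure_mono hsplit
      _ ≤ ν (Ioo 0 c) + ν (Ico c 1) := measure_union_le _ _
      _ < ⊤ := ENNReal.add_lt_top.2 ⟨hcover.trans_lt ENNReal.ofReal_lt_top, htail⟩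
  rw [hosgood'] at hlt
  exact absurd hlt (lt_irrefl ⊤)
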